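/- For any integer m > 0 and any choice of elements σ_i ∈ F₂ (1 ≤ i ≤ m), χ_ij ∈ F₂ (1 ≤ i < j ≤ m), and α_ijk ∈ F₂ (1 ≤ i < j < k ≤ m), there exist an integer n and a doubly even binary code C ⊆ F₂ⁿ of dimension m with a basis c₁, …, c_m such that wt(c_i)/4 ≡ σ_i (mod 2) for all i, wt(c_i∩c_j)/2 ≡ χ_ij (mod 2) for all i < j, and wt(c_i∩c_j∩c_k) ≡ α_ijk (mod 2) for all i < j < k. -/
import Mathlib


/-- The Hamming weight of a binary vector. -/
def wt {n : ℕ} (c : Fin n → ZMod 2) : ℕ :=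
  (Finset.univ.filter fun i => c i ≠ 0).card

/-- The number of coordinates where both vectors are nonzero. -/
def wt2 {n : ℕ} (c d : Fin n → ZMod 2) : ℕ :=
  (Finset.univ.filter fun i => c i ≠ 0 ∧ d i ≠ 0).card

/-- The number of coordinates where all three vectors are nonzero. -/
def wt3 {n : ℕ} (c d e : Fin n → ZMod 2) : ℕ :=
  (Finset.univ.filter fun i => c i ≠ 0 ∧ d i ≠ 0 ∧ e i ≠ 0).card

def wtF {I : Type*} [Fintype I] (c : I → ZMod 2) : ℕ :=
  (Finset.univ.filter fun i => c i ≠ 0).card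

def wt2F {I : Type*} [Fintype I] (c d : I → ZMod 2) : ℕ :=
  (Finset.univ.filter fun i => c i ≠ 0 ∧ d i ≠ 0).card

def wt3F {I : Type*} [Fintype I] (c d e : I → ZMod 2) : ℕ :=
  (Finset.univ.filter fun i => c i ≠ 0 ∧ d i ≠ 0 ∧ e i ≠ 0).card

section Basic
variable {I : Type*} [Fintype I] (u v w : I → ZMod 2)

lemma wtF_add : wtF (u + v) + 2 * wt2F u v = wtF u + wtF v := by
  unfold wtF wt2F
  rw [Finset.card_filter, Finset.card_filter, Finset.card_filter, Finset.card_filter,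
    Finset.mul_sum, ← Finset.sum_add_distrib, ← Finset.sum_add_distrib]
  refine Finset.sum_congr rfl fun x _ => ?_
  have h : ∀ a b : ZMod 2, ((if a + b ≠ 0 then 1 else 0) + 2 * (if a ≠ 0 ∧ b ≠ 0 then 1 else 0) : ℕ)
      = (if a ≠ 0 then 1 else 0) + (if b ≠ 0 then 1 else 0) := by decide
  simpa using h (u x) (v x)

lemma wt2F_add_left : wt2F (u + v) w + 2 * wt3F u v w = wt2F u w + wt2F v w := by
  unfold wt2F wt3F
  rw [Finset.card_filter, Finset.card_filter, Finset.card_filter, Finset.card_filter,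
    Finset.mul_sum, ← Finset.sum_add_distrib, ← Finset.sum_add_distrib]
  refine Finset.sum_congr rfl fun x _ => ?_
  have h : ∀ a b c : ZMod 2, ((if a + b ≠ 0 ∧ c ≠ 0 then 1 else 0)
      + 2 * (if a ≠ 0 ∧ b ≠ 0 ∧ c ≠ 0 then 1 else 0) : ℕ)
      = (if a ≠ 0 ∧ c ≠ 0 then 1 else 0) + (if b ≠ 0 ∧ c ≠ 0 then 1 else 0) := by decide
  simpa using h (u x) (v x) (w x)

lemma wt2F_comm : wt2F u v = wt2F v u := by
  unfold wt2F; congr 1; apply Finset.filter_congr; intro x _; exact and_comm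

lemma wt2F_self : wt2F u u = wtF u := by
  unfold wt2F wtF; congr 1; apply Finset.filter_congr; intro x _; simp

lemma wt2F_zero_left : wt2F 0 w = 0 := by simp [wt2F]

lemma wtF_zero : wtF (0 : I → ZMod 2) = 0 := by simp [wtF]

lemma two_cases (a : ZMod 2) : a = 0 ∨ a = 1 := by revert a; decide
end Basic

lemma span_doubly_even {I : Type*} [Fintype I] {m : ℕ} (c : Fin m → I → ZMod 2)
    (h1 : ∀ i, wtF (c i) % 4 = 0) (h2 : ∀ i j, wt2F (c i) (c j) % 2 = 0) :
    ∀ v ∈ Submodule.span (ZMod 2) (Set.range c), wtF v % 4 = 0 := by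
  have hpair : ∀ u ∈ Submodule.span (ZMod 2) (Set.range c),
      ∀ v ∈ Submodule.span (ZMod 2) (Set.range c), wt2F u v % 2 = 0 := by
    intro u hu v hv
    induction hu, hv using Submodule.span_induction₂ with
    | mem_mem x y hx hy =>
      obtain ⟨i, rfl⟩ := hx; obtain ⟨j, rfl⟩ := hy; exact h2 i j
    | zero_left y hy => simp [wt2F_zero_left]
    | zero_right x hx => rw [wt2F_comm]; simp [wt2F_zero_left]
    | add_left x y z hx hy hz pxz pyz =>
      have := wt2F_add_left x y z; omega
    | add_right x y z hx hy hz pxy pxz =>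
      rw [wt2F_comm] at pxy pxz ⊢
      have := wt2F_add_left y z x; omega
    | smul_left r x y hx hy pxy =>
      rcases two_cases r with rfl | rfl
      · simp [wt2F_zero_left]
      · simpa using pxy
    | smul_right r x y hx hy pxy =>
      rcases two_cases r with rfl | rfl
      · rw [wt2F_comm]; simp [wt2F_zero_left]
      · simpa using pxy
  intro v hv
  induction hv using Submodule.span_induction with
  | mem x hx => obtain ⟨i, rfl⟩ := hx; exact h1 i
  | zero => simp [wtF_zero]
  | add x y hx hy px py =>
    have h := wtF_add x y
    have := hpair x hx y hy
    omega
  | smul r x hx px =>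
    rcases two_cases r with rfl | rfl
    · simp [wtF_zero]
    · simpa using px

lemma wtF_sum_type {I J : Type*} [Fintype I] [Fintype J] (v : I ⊕ J → ZMod 2) :
    wtF v = wtF (v ∘ Sum.inl) + wtF (v ∘ Sum.inr) := by
  unfold wtF
  rw [← Finset.card_toLeft_add_card_toRight]
  congr 1 <;> [skip; skip] <;>
  · congr 1; ext x; simp

lemma card_lt_fin (N s : ℕ) (hs : s ≤ N) :
    (Finset.univ.filter fun x : Fin N => (x : ℕ) < s).card = s := by
  rw [← Finset.card_range s]
  apply Finset.card_bij (fun (x : Fin N) _ => (x : ℕ))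
  · intro a ha; simp only [Finset.mem_filter, Finset.card_range] at ha ⊢; simpa using ha.2
  · intro a _ b _ h; exact Fin.ext h
  · intro b hb
    rw [Finset.mem_range] at hb
    exact ⟨⟨b, lt_of_lt_of_le hb hs⟩, by simp [hb], rfl⟩

lemma ite_ne_zero (c : Prop) [Decidable c] :
    ((if c then (1 : ZMod 2) else 0) ≠ 0) ↔ c := by
  split <;> simp_all

section Cons
variable {m : ℕ} (σv : Fin m → ZMod 2) (χv : Fin m → Fin m → ZMod 2)
  (αv : Fin m → Fin m → Fin m → ZMod 2)

def Ncnt (a b : Fin m) : ℕ :=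
  (Finset.univ.filter fun p : Fin m × Fin m × Fin m =>
    p.1 < p.2.1 ∧ p.2.1 < p.2.2 ∧ αv p.1 p.2.1 p.2.2 = 1 ∧
    (a = p.1 ∨ a = p.2.1 ∨ a = p.2.2) ∧ (b = p.1 ∨ b = p.2.1 ∨ b = p.2.2)).card

def tcnt (a b : Fin m) : ℕ := (2 * (χv a b).val + (4 - Ncnt αv a b % 4)) % 4

lemma tcnt_lt (a b : Fin m) : tcnt χv αv a b < 4 := Nat.mod_lt _ (by norm_num)

lemma tcnt_spec (a b : Fin m) : (Ncnt αv a b + tcnt χv αv a b) % 4 = 2 * (χv a b).val := by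
  have h1 : (χv a b).val < 2 := ZMod.val_lt _
  have h2 : Ncnt αv a b % 4 < 4 := Nat.mod_lt _ (by norm_num)
  unfold tcnt
  omega

def Wcnt (a : Fin m) : ℕ :=
  (Finset.univ.filter fun p : Fin m × Fin m × Fin m =>
    p.1 < p.2.1 ∧ p.2.1 < p.2.2 ∧ αv p.1 p.2.1 p.2.2 = 1 ∧
    (a = p.1 ∨ a = p.2.1 ∨ a = p.2.2)).card
  + (Finset.univ.filter fun p : Fin m × Fin m × Fin 4 =>
    p.1 < p.2.1 ∧ (a = p.1 ∨ a = p.2.1) ∧ (p.2.2 : ℕ) < tcnt χv αv p.1 p.2.1).card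

def scnt (a : Fin m) : ℕ := (4 * (σv a).val + (8 - Wcnt χv αv a % 8)) % 8 + 8

lemma scnt_le (a : Fin m) : scnt σv χv αv a ≤ 16 := by
  have : (4 * (σv a).val + (8 - Wcnt χv αv a % 8)) % 8 < 8 := Nat.mod_lt _ (by norm_num)
  unfold scnt; omega

lemma scnt_spec (a : Fin m) :
    (Wcnt χv αv a + scnt σv χv αv a) % 8 = 4 * (σv a).val := by
  have h1 : (σv a).val < 2 := ZMod.val_lt _
  have h2 : Wcnt χv αv a % 8 < 8 := Nat.mod_lt _ (by norm_num)
  unfold scnt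
  omega

def dvec (i : Fin m) :
    (Fin m × Fin m × Fin m) ⊕ (Fin m × Fin m × Fin 4) ⊕ (Fin m × Fin 16) → ZMod 2
  | .inl p => if p.1 < p.2.1 ∧ p.2.1 < p.2.2 ∧ αv p.1 p.2.1 p.2.2 = 1 ∧
      (i = p.1 ∨ i = p.2.1 ∨ i = p.2.2) then 1 else 0
  | .inr (.inl p) => if p.1 < p.2.1 ∧ (i = p.1 ∨ i = p.2.1) ∧
      (p.2.2 : ℕ) < tcnt χv αv p.1 p.2.1 then 1 else 0
  | .inr (.inr p) => if i = p.1 ∧ (p.2 : ℕ) < scnt σv χv αv p.1 then 1 else 0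

end Cons

section Counting
variable {m : ℕ} (σv : Fin m → ZMod 2) (χv : Fin m → Fin m → ZMod 2)
  (αv : Fin m → Fin m → Fin m → ZMod 2)

lemma singles_card (i : Fin m) :
    (Finset.univ.filter fun p : Fin m × Fin 16 =>
      i = p.1 ∧ (p.2 : ℕ) < scnt σv χv αv p.1).card = scnt σv χv αv i := by
  have he : (Finset.univ.filter fun p : Fin m × Fin 16 =>
        i = p.1 ∧ (p.2 : ℕ) < scnt σv χv αv p.1)
      = Finset.univ.filter fun p : Fin m × Fin 16 =>
        i = p.1 ∧ (p.2 : ℕ) < scnt σv χv αv i := by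
    apply Finset.filter_congr
    rintro ⟨a, x⟩ -
    constructor <;> rintro ⟨rfl, h⟩ <;> exact ⟨rfl, h⟩
  rw [he, ← Finset.univ_product_univ,
    Finset.filter_product (fun a : Fin m => i = a) (fun x : Fin 16 => (x : ℕ) < scnt σv χv αv i),
    Finset.card_product, Finset.filter_eq, if_pos (Finset.mem_univ i), Finset.card_singleton,
    one_mul, card_lt_fin _ _ (scnt_le σv χv αv i)]

lemma wt_dvec (i : Fin m) :
    wtF (dvec σv χv αv i) = Wcnt χv αv i + scnt σv χv αv i := by
  rw [show dvec σv χv αv i = dvec σv χv αv i from rfl]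
  rw [wtF_sum_type, wtF_sum_type]
  have h1 : wtF (dvec σv χv αv i ∘ Sum.inl)
      = (Finset.univ.filter fun p : Fin m × Fin m × Fin m =>
        p.1 < p.2.1 ∧ p.2.1 < p.2.2 ∧ αv p.1 p.2.1 p.2.2 = 1 ∧
        (i = p.1 ∨ i = p.2.1 ∨ i = p.2.2)).card := by
    unfold wtF; congr 1; apply Finset.filter_congr; intro p _
    exact ite_ne_zero _
  have h2 : wtF (dvec σv χv αv i ∘ Sum.inr ∘ Sum.inl)
      = (Finset.univ.filter fun p : Fin m × Fin m × Fin 4 =>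
        p.1 < p.2.1 ∧ (i = p.1 ∨ i = p.2.1) ∧ (p.2.2 : ℕ) < tcnt χv αv p.1 p.2.1).card := by
    unfold wtF; congr 1; apply Finset.filter_congr; intro p _
    exact ite_ne_zero _
  have h3 : wtF (dvec σv χv αv i ∘ Sum.inr ∘ Sum.inr)
      = (Finset.univ.filter fun p : Fin m × Fin 16 =>
        i = p.1 ∧ (p.2 : ℕ) < scnt σv χv αv p.1).card := by
    unfold wtF; congr 1; apply Finset.filter_congr; intro p _
    exact ite_ne_zero _
  rw [show (dvec σv χv αv i ∘ Sum.inr) ∘ Sum.inl = dvec σv χv αv i ∘ Sum.inr ∘ Sum.inl from rfl,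
    show (dvec σv χv αv i ∘ Sum.inr) ∘ Sum.inr = dvec σv χv αv i ∘ Sum.inr ∘ Sum.inr from rfl,
    h1, h2, h3, singles_card]
  unfold Wcnt; omega

end Counting

lemma wt2F_sum_type {I J : Type*} [Fintype I] [Fintype J] (u v : I ⊕ J → ZMod 2) :
    wt2F u v = wt2F (u ∘ Sum.inl) (v ∘ Sum.inl) + wt2F (u ∘ Sum.inr) (v ∘ Sum.inr) := by
  unfold wt2F
  rw [← Finset.card_toLeft_add_card_toRight]
  congr 1 <;> [skip; skip] <;>
  · congr 1; ext x; simp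

lemma wt3F_sum_type {I J : Type*} [Fintype I] [Fintype J] (u v w : I ⊕ J → ZMod 2) :
    wt3F u v w = wt3F (u ∘ Sum.inl) (v ∘ Sum.inl) (w ∘ Sum.inl)
      + wt3F (u ∘ Sum.inr) (v ∘ Sum.inr) (w ∘ Sum.inr) := by
  unfold wt3F
  rw [← Finset.card_toLeft_add_card_toRight]
  congr 1 <;> [skip; skip] <;>
  · congr 1; ext x; simp

lemma pigeon2 {m : ℕ} {i j a b : Fin m} (hij : i < j) (hab : a < b)
    (hi : i = a ∨ i = b) (hj : j = a ∨ j = b) : a = i ∧ b = j := by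
  simp only [Fin.lt_def] at hij hab
  simp only [Fin.ext_iff] at hi hj ⊢
  rcases hi with h1 | h1 <;> rcases hj with h2 | h2 <;> omega

lemma pigeon3 {m : ℕ} {i j k a b c : Fin m} (hij : i < j) (hjk : j < k)
    (hab : a < b) (hbc : b < c)
    (hi : i = a ∨ i = b ∨ i = c) (hj : j = a ∨ j = b ∨ j = c)
    (hk : k = a ∨ k = b ∨ k = c) : a = i ∧ b = j ∧ c = k := by
  simp only [Fin.lt_def] at hij hjk hab hbc
  simp only [Fin.ext_iff] at hi hj hk ⊢
  rcases hi with h1 | h1 | h1 <;> rcases hj with h2 | h2 | h2 <;>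
    rcases hk with h3 | h3 | h3 <;> omega

section Counting2
variable {m : ℕ} (σv : Fin m → ZMod 2) (χv : Fin m → Fin m → ZMod 2)
  (αv : Fin m → Fin m → Fin m → ZMod 2)

lemma wt2_dvec {i j : Fin m} (hij : i < j) :
    wt2F (dvec σv χv αv i) (dvec σv χv αv j) = Ncnt αv i j + tcnt χv αv i j := by
  rw [wt2F_sum_type, wt2F_sum_type]
  have h1 : wt2F (dvec σv χv αv i ∘ Sum.inl) (dvec σv χv αv j ∘ Sum.inl) = Ncnt αv i j := by
    unfold wt2F Ncnt; congr 1; apply Finset.filter_congr; intro p _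
    rw [show (dvec σv χv αv i ∘ Sum.inl) p ≠ 0 ↔ _ from ite_ne_zero _,
      show (dvec σv χv αv j ∘ Sum.inl) p ≠ 0 ↔ _ from ite_ne_zero _]
    tauto
  have h2 : wt2F ((dvec σv χv αv i ∘ Sum.inr) ∘ Sum.inl)
      ((dvec σv χv αv j ∘ Sum.inr) ∘ Sum.inl) = tcnt χv αv i j := by
    unfold wt2F
    have he : (Finset.univ.filter fun p : Fin m × Fin m × Fin 4 =>
          ((dvec σv χv αv i ∘ Sum.inr) ∘ Sum.inl) p ≠ 0 ∧
          ((dvec σv χv αv j ∘ Sum.inr) ∘ Sum.inl) p ≠ 0)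
        = Finset.univ.filter fun p : Fin m × Fin m × Fin 4 =>
          i = p.1 ∧ j = p.2.1 ∧ (p.2.2 : ℕ) < tcnt χv αv i j := by
      apply Finset.filter_congr
      rintro ⟨a, b, x⟩ -
      simp only [Function.comp_apply, dvec, ite_ne_zero]
      constructor
      · rintro ⟨⟨hab, hi, hx⟩, ⟨-, hj, -⟩⟩
        obtain ⟨rfl, rfl⟩ := pigeon2 hij hab hi hj
        exact ⟨rfl, rfl, hx⟩
      · rintro ⟨rfl, rfl, hx⟩
        exact ⟨⟨hij, Or.inl rfl, hx⟩, hij, Or.inr rfl, hx⟩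
    rw [he, ← Finset.univ_product_univ,
      Finset.filter_product (fun a : Fin m => i = a)
        (fun q : Fin m × Fin 4 => j = q.1 ∧ (q.2 : ℕ) < tcnt χv αv i j),
      Finset.card_product, Finset.filter_eq, if_pos (Finset.mem_univ i),
      Finset.card_singleton, one_mul, ← Finset.univ_product_univ,
      Finset.filter_product (fun a : Fin m => j = a)
        (fun x : Fin 4 => (x : ℕ) < tcnt χv αv i j),
      Finset.card_product, Finset.filter_eq, if_pos (Finset.mem_univ j),
      Finset.card_singleton, one_mul, card_lt_fin _ _ (le_of_lt (tcnt_lt χv αv i j))]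
  have h3 : wt2F ((dvec σv χv αv i ∘ Sum.inr) ∘ Sum.inr)
      ((dvec σv χv αv j ∘ Sum.inr) ∘ Sum.inr) = 0 := by
    unfold wt2F
    rw [Finset.card_eq_zero, Finset.filter_eq_empty_iff]
    rintro ⟨a, x⟩ -
    simp only [Function.comp_apply, dvec, ite_ne_zero]
    rintro ⟨⟨rfl, -⟩, ⟨rfl, -⟩⟩
    exact absurd hij (lt_irrefl _)
  rw [h1, h2, h3]
  omega

lemma wt3_dvec {i j k : Fin m} (hij : i < j) (hjk : j < k) :
    wt3F (dvec σv χv αv i) (dvec σv χv αv j) (dvec σv χv αv k)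
      = if αv i j k = 1 then 1 else 0 := by
  rw [wt3F_sum_type, wt3F_sum_type]
  have h1 : wt3F (dvec σv χv αv i ∘ Sum.inl) (dvec σv χv αv j ∘ Sum.inl)
      (dvec σv χv αv k ∘ Sum.inl) = if αv i j k = 1 then 1 else 0 := by
    unfold wt3F
    have he : (Finset.univ.filter fun p : Fin m × Fin m × Fin m =>
          (dvec σv χv αv i ∘ Sum.inl) p ≠ 0 ∧ (dvec σv χv αv j ∘ Sum.inl) p ≠ 0 ∧
          (dvec σv χv αv k ∘ Sum.inl) p ≠ 0)
        = Finset.univ.filter fun p : Fin m × Fin m × Fin m =>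
          p = (i, j, k) ∧ αv i j k = 1 := by
      apply Finset.filter_congr
      intro p _
      simp only [Function.comp_apply, dvec, ite_ne_zero]
      constructor
      · rintro ⟨⟨hab, hbc, hα, hi⟩, ⟨-, -, -, hj⟩, ⟨-, -, -, hk⟩⟩
        obtain ⟨a, b, c⟩ := p
        obtain ⟨rfl, rfl, rfl⟩ := pigeon3 hij hjk hab hbc hi hj hk
        exact ⟨rfl, hα⟩
      · rintro ⟨rfl, hα⟩
        exact ⟨⟨hij, hjk, hα, Or.inl rfl⟩, ⟨hij, hjk, hα, Or.inr (Or.inl rfl)⟩,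
          hij, hjk, hα, Or.inr (Or.inr rfl)⟩
    rw [he]
    by_cases hα : αv i j k = 1
    · simp [hα, Finset.filter_eq']
    · simp [hα]
  have h2 : wt3F ((dvec σv χv αv i ∘ Sum.inr) ∘ Sum.inl)
      ((dvec σv χv αv j ∘ Sum.inr) ∘ Sum.inl)
      ((dvec σv χv αv k ∘ Sum.inr) ∘ Sum.inl) = 0 := by
    unfold wt3F
    rw [Finset.card_eq_zero, Finset.filter_eq_empty_iff]
    rintro ⟨a, b, x⟩ -
    simp only [Function.comp_apply, dvec, ite_ne_zero]
    rintro ⟨⟨hab, hi, -⟩, ⟨-, hj, -⟩, ⟨-, hk, -⟩⟩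
    obtain ⟨rfl, rfl⟩ := pigeon2 hij hab hi hj
    rcases hk with rfl | rfl
    · exact absurd (hij.trans hjk) (lt_irrefl _)
    · exact absurd hjk (lt_irrefl _)
  have h3 : wt3F ((dvec σv χv αv i ∘ Sum.inr) ∘ Sum.inr)
      ((dvec σv χv αv j ∘ Sum.inr) ∘ Sum.inr)
      ((dvec σv χv αv k ∘ Sum.inr) ∘ Sum.inr) = 0 := by
    unfold wt3F
    rw [Finset.card_eq_zero, Finset.filter_eq_empty_iff]
    rintro ⟨a, x⟩ -
    simp only [Function.comp_apply, dvec, ite_ne_zero]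
    rintro ⟨⟨rfl, -⟩, ⟨rfl, -⟩, -⟩
    exact absurd hij (lt_irrefl _)
  rw [h1, h2, h3, add_zero, add_zero]

end Counting2

section Final
variable {m : ℕ} (σv : Fin m → ZMod 2) (χv : Fin m → Fin m → ZMod 2)
  (αv : Fin m → Fin m → Fin m → ZMod 2)

lemma wt_dvec_mod (i : Fin m) : wtF (dvec σv χv αv i) % 8 = 4 * (σv i).val := by
  rw [wt_dvec]; exact scnt_spec σv χv αv i

lemma dvec_pairs_even (i j : Fin m) : wt2F (dvec σv χv αv i) (dvec σv χv αv j) % 2 = 0 := by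
  rcases lt_trichotomy i j with h | rfl | h
  · have h1 := wt2_dvec σv χv αv h
    have h2 := tcnt_spec χv αv i j
    have h3 : (χv i j).val < 2 := ZMod.val_lt _
    omega
  · rw [wt2F_self]
    have h1 := wt_dvec_mod σv χv αv i
    have h3 : (σv i).val < 2 := ZMod.val_lt _
    omega
  · rw [wt2F_comm]
    have h1 := wt2_dvec σv χv αv h
    have h2 := tcnt_spec χv αv j i
    have h3 : (χv j i).val < 2 := ZMod.val_lt _
    omega

lemma dvec_li : LinearIndependent (ZMod 2) (dvec σv χv αv) := by
  rw [Fintype.linearIndependent_iff]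
  intro g hg a
  have h := congrFun hg (Sum.inr (Sum.inr (a, ⟨0, by norm_num⟩)))
  rw [Finset.sum_apply] at h
  rw [Finset.sum_eq_single a] at h
  · have hs : 0 < scnt σv χv αv a := by have := scnt_spec σv χv αv a; unfold scnt at *; omega
    simpa [dvec, hs] using h
  · intro b _ hb
    simp [dvec, hb]
  · intro hb; exact absurd (Finset.mem_univ a) hb

lemma wtF_comp {I J : Type*} [Fintype I] [Fintype J] (e : I ≃ J) (v : J → ZMod 2) :
    wtF (v ∘ e) = wtF v := by
  apply Finset.card_equiv e; intro x; simp

lemma wt2F_comp {I J : Type*} [Fintype I] [Fintype J] (e : I ≃ J) (u v : J → ZMod 2) :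
    wt2F (u ∘ e) (v ∘ e) = wt2F u v := by
  apply Finset.card_equiv e; intro x; simp

lemma wt3F_comp {I J : Type*} [Fintype I] [Fintype J] (e : I ≃ J) (u v w : J → ZMod 2) :
    wt3F (u ∘ e) (v ∘ e) (w ∘ e) = wt3F u v w := by
  apply Finset.card_equiv e; intro x; simp

end Final

/-- For any prescribed values `σ_i`, `χ_ij` (`i < j`), `α_ijk` (`i < j < k`)
in `F₂`, there is a doubly even binary code of dimension `m` with a basis
realizing these values. -/
theorem stmt15 (m : ℕ) (hm : 0 < m) (σv : Fin m → ZMod 2)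
    (χv : Fin m → Fin m → ZMod 2) (αv : Fin m → Fin m → Fin m → ZMod 2) :
    ∃ (n : ℕ) (c : Fin m → (Fin n → ZMod 2)),
      LinearIndependent (ZMod 2) c ∧
      (∀ v ∈ Submodule.span (ZMod 2) (Set.range c), wt v % 4 = 0) ∧
      (∀ i : Fin m, ((wt (c i) / 4 : ℕ) : ZMod 2) = σv i) ∧
      (∀ i j : Fin m, i < j → ((wt2 (c i) (c j) / 2 : ℕ) : ZMod 2) = χv i j) ∧
      (∀ i j k : Fin m, i < j → j < k →
        ((wt3 (c i) (c j) (c k) : ℕ) : ZMod 2) = αv i j k) := by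
  classical
  set I := (Fin m × Fin m × Fin m) ⊕ (Fin m × Fin m × Fin 4) ⊕ (Fin m × Fin 16) with hI
  refine ⟨Fintype.card I, ?_⟩
  set e : Fin (Fintype.card I) ≃ I := (Fintype.equivFin I).symm with he
  refine ⟨fun i => dvec σv χv αv i ∘ e, ?_, ?_, ?_, ?_, ?_⟩
  · -- linear independence
    have hL : Function.Injective (LinearMap.funLeft (ZMod 2) (ZMod 2) (e : Fin _ → I)) :=
      LinearMap.funLeft_injective_of_surjective _ _ _ e.surjective
    have := (dvec_li σv χv αv).map' (LinearMap.funLeft (ZMod 2) (ZMod 2) e)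
      (LinearMap.ker_eq_bot.mpr hL)
    exact this
  · -- doubly even
    intro v hv
    have hr : Set.range (fun i => dvec σv χv αv i ∘ e)
        = (LinearMap.funLeft (ZMod 2) (ZMod 2) (e : Fin _ → I)) '' Set.range (dvec σv χv αv) := by
      rw [← Set.range_comp]; rfl
    rw [hr, Submodule.span_image] at hv
    obtain ⟨w, hw, rfl⟩ := hv
    show wtF _ % 4 = 0
    rw [show (LinearMap.funLeft (ZMod 2) (ZMod 2) (e : Fin _ → I)) w = w ∘ e from rfl,
      wtF_comp]
    refine span_doubly_even (dvec σv χv αv) ?_ ?_ w hw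
    · intro i
      have h1 := wt_dvec_mod σv χv αv i
      omega
    · exact dvec_pairs_even σv χv αv
  · -- sigma
    intro i
    have h0 : wt (dvec σv χv αv i ∘ e) = wtF (dvec σv χv αv i) := wtF_comp e _
    have h1 := wt_dvec_mod σv χv αv i
    have h2 : (σv i).val < 2 := ZMod.val_lt _
    have h3 : wt (dvec σv χv αv i ∘ e) / 4 % 2 = (σv i).val := by omega
    rw [← ZMod.natCast_mod, h3, ZMod.natCast_rightInverse _]
  · -- chi
    intro i j hij
    have h0 : wt2 (dvec σv χv αv i ∘ e) (dvec σv χv αv j ∘ e)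
        = wt2F (dvec σv χv αv i) (dvec σv χv αv j) := wt2F_comp e _ _
    have h1 := wt2_dvec σv χv αv hij
    have h2 := tcnt_spec χv αv i j
    have h3 : (χv i j).val < 2 := ZMod.val_lt _
    have h4 : wt2 (dvec σv χv αv i ∘ e) (dvec σv χv αv j ∘ e) / 2 % 2 = (χv i j).val := by omega
    rw [← ZMod.natCast_mod, h4, ZMod.natCast_rightInverse _]
  · -- alpha
    intro i j k hij hjk
    have h0 : wt3 (dvec σv χv αv i ∘ e) (dvec σv χv αv j ∘ e) (dvec σv χv αv k ∘ e)
        = wt3F (dvec σv χv αv i) (dvec σv χv αv j) (dvec σv χv αv k) := wt3F_comp e _ _ _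
    rw [h0, wt3_dvec σv χv αv hij hjk]
    rcases two_cases (αv i j k) with hα | hα <;> rw [hα] <;> norm_num
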